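/- arXiv:math/0412112 — 4 statements merged into one kernel-verified Lean document; each statement's English description precedes it below -/
import Mathlib

section
/- Let Ω = (a,b) be a bounded open interval, D ⊆ Ω measurable with |Ω \ D| > 0, let ū ∈ L²(Ω), μ, λ > 0, and let 𝓛 : ℝ → ℝ be continuous. Then the functional F(u) = μ ∫_{Ω\D} |u(x) − ū(x)|² dx + λ ∫_D |𝓛(u(x)) − ū(x)|² dx + ∫_Ω |u'(x)|² dx attains its infimum over W^{1,2}(Ω): there exists u* ∈ W^{1,2}(Ω) with F(u*) ≤ F(u) for all u ∈ W^{1,2}(Ω). -/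
/- STATEMENT 6 (existence for Problem 2, p = 2): On Ω = (a,b), with D ⊆ Ω measurable,
|Ω \ D| > 0, ū ∈ L²(Ω), μ, λ > 0, 𝓛 continuous, the functional
F(u) = μ ∫_{Ω\D} |u-ū|² + λ ∫_D |𝓛(u)-ū|² + ∫_Ω |u'|²
attains its infimum over W^{1,2}(Ω). Here W^{1,2}(Ω) is encoded as the set of pairs
(u, u') with u absolutely continuous on (a,b) with a.e. derivative u' (via the FTC
characterization), u ∈ L²(Ω), u' ∈ L²(Ω). -/

open MeasureTheory Set

open Filter Topology
set_option synthInstance.maxHeartbeats 1000000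
set_option maxHeartbeats 1000000

local notation "⟪" x ", " y "⟫" => @inner ℝ _ _ x y

/-- Bounded sequences in a separable real Hilbert space have weakly convergent subsequences. -/
lemma exists_weak_subseq {H : Type*} [NormedAddCommGroup H] [InnerProductSpace ℝ H]
    [CompleteSpace H] [SecondCountableTopology H]
    (g : ℕ → H) (R : ℝ) (hg : ∀ n, ‖g n‖ ≤ R) :
    ∃ g₀ : H, ∃ φ : ℕ → ℕ, StrictMono φ ∧
      ∀ y : H, Tendsto (fun n => ⟪g (φ n), y⟫) atTop (𝓝 ⟪g₀, y⟫) := by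
  have hR : 0 ≤ R := le_trans (norm_nonneg _) (hg 0)
  obtain ⟨e, he⟩ := TopologicalSpace.exists_dense_seq H
  -- the sequence of inner products with the dense family lives in a compact product
  set s : Set (ℕ → ℝ) := Set.univ.pi fun k => Icc (-(R * ‖e k‖)) (R * ‖e k‖) with hs
  have hsc : IsCompact s := isCompact_univ_pi fun k => isCompact_Icc
  have hmem : ∀ n, (fun k => ⟪g n, e k⟫) ∈ s := by
    intro n k _
    have h1 : |⟪g n, e k⟫| ≤ ‖g n‖ * ‖e k‖ := abs_real_inner_le_norm _ _
    have h2 : ‖g n‖ * ‖e k‖ ≤ R * ‖e k‖ :=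
      mul_le_mul_of_nonneg_right (hg n) (norm_nonneg _)
    constructor
    · linarith [(abs_le.1 (h1.trans h2)).1]
    · linarith [(abs_le.1 (h1.trans h2)).2]
  obtain ⟨x, -, φ, hφ, hconv⟩ := hsc.tendsto_subseq hmem
  have hconvk : ∀ k, Tendsto (fun n => ⟪g (φ n), e k⟫) atTop (𝓝 (x k)) := by
    intro k
    exact (tendsto_pi_nhds.1 hconv) k
  -- for each y, the inner products form a Cauchy sequence
  have hcauchy : ∀ y : H, ∃ l : ℝ, Tendsto (fun n => ⟪g (φ n), y⟫) atTop (𝓝 l) := by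
    intro y
    have : CauchySeq fun n => ⟪g (φ n), y⟫ := by
      rw [Metric.cauchySeq_iff]
      intro ε hε
      obtain ⟨k, hk⟩ := Metric.denseRange_iff.1 he y (ε / (3 * (R + 1)))
        (by positivity)
      have hcau : CauchySeq fun n => ⟪g (φ n), e k⟫ := (hconvk k).cauchySeq
      rw [Metric.cauchySeq_iff] at hcau
      obtain ⟨N, hN⟩ := hcau (ε / 3) (by positivity)
      refine ⟨N, fun m hm n hn => ?_⟩
      have key : ∀ j, |⟪g (φ j), y⟫ - ⟪g (φ j), e k⟫| ≤ ε / 3 := by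
        intro j
        have : ⟪g (φ j), y⟫ - ⟪g (φ j), e k⟫ = ⟪g (φ j), y - e k⟫ := by
          rw [inner_sub_right]
        rw [this]
        have h1 : |⟪g (φ j), y - e k⟫| ≤ ‖g (φ j)‖ * ‖y - e k‖ := abs_real_inner_le_norm _ _
        have h2 : ‖y - e k‖ < ε / (3 * (R + 1)) := by
          rw [← dist_eq_norm]; exact hk
        have h3 : ‖g (φ j)‖ * ‖y - e k‖ ≤ R * ‖y - e k‖ :=
          mul_le_mul_of_nonneg_right (hg _) (norm_nonneg _)
        have h4 : R * ‖y - e k‖ ≤ (R + 1) * (ε / (3 * (R + 1))) := by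
          apply mul_le_mul (by linarith) h2.le (norm_nonneg _) (by linarith)
        have h5 : (R + 1) * (ε / (3 * (R + 1))) = ε / 3 := by
          field_simp
        linarith [h1.trans (h3.trans (h4.trans_eq h5))]
      have hd := hN m hm n hn
      rw [Real.dist_eq] at hd ⊢
      have := key m; have := key n
      have : |⟪g (φ m), y⟫ - ⟪g (φ n), y⟫| ≤
          |⟪g (φ m), y⟫ - ⟪g (φ m), e k⟫| + |⟪g (φ m), e k⟫ - ⟪g (φ n), e k⟫| +
          |⟪g (φ n), e k⟫ - ⟪g (φ n), y⟫| := by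
        have := abs_sub_le (⟪g (φ m), y⟫) (⟪g (φ m), e k⟫) (⟪g (φ n), y⟫)
        have := abs_sub_le (⟪g (φ m), e k⟫) (⟪g (φ n), e k⟫) (⟪g (φ n), y⟫)
        linarith
      have h6 := key m
      have h7 := key n
      rw [abs_sub_comm] at h7
      linarith
    exact cauchySeq_tendsto_of_complete this
  choose l hl using hcauchy
  -- l is a bounded linear functional
  have hadd : ∀ y z, l (y + z) = l y + l z := by
    intro y z
    have h1 : Tendsto (fun n => ⟪g (φ n), y + z⟫) atTop (𝓝 (l y + l z)) := by
      have := (hl y).add (hl z)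
      simpa [← inner_add_right] using this
    exact tendsto_nhds_unique (hl _) h1
  have hsmul : ∀ (c : ℝ) y, l (c • y) = c * l y := by
    intro c y
    have h1 : Tendsto (fun n => ⟪g (φ n), c • y⟫) atTop (𝓝 (c * l y)) := by
      have := (hl y).const_mul c
      simpa [inner_smul_right] using this
    exact tendsto_nhds_unique (hl _) h1
  have hbound : ∀ y, ‖l y‖ ≤ R * ‖y‖ := by
    intro y
    have : ∀ n, ‖⟪g (φ n), y⟫‖ ≤ R * ‖y‖ := fun n =>
      le_trans (abs_real_inner_le_norm _ _) (mul_le_mul_of_nonneg_right (hg _) (norm_nonneg _))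
    exact le_of_tendsto ((hl y).norm) (Eventually.of_forall this)
  set T : H →L[ℝ] ℝ := LinearMap.mkContinuous
    { toFun := l, map_add' := hadd, map_smul' := hsmul } R hbound with hT
  refine ⟨(InnerProductSpace.toDual ℝ H).symm T, φ, hφ, fun y => ?_⟩
  have : ⟪(InnerProductSpace.toDual ℝ H).symm T, y⟫ = T y := by
    rw [← InnerProductSpace.toDual_apply_apply]
    simp
  rw [this]
  exact hl y


/-- `u` is in W^{1,2}((a,b)) with derivative `u'`. -/
def W12 (a b : ℝ) (u u' : ℝ → ℝ) : Prop :=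
  (∀ x ∈ Ioo a b, ∀ y ∈ Ioo a b, u y - u x = ∫ t in x..y, u' t) ∧
  MemLp u 2 (volume.restrict (Ioo a b)) ∧
  MemLp u' 2 (volume.restrict (Ioo a b))

/-- The inpainting energy functional of Problem 2 of the paper (p = 2). -/
noncomputable def inpaintF (a b mu lam : ℝ) (D : Set ℝ) (ub L : ℝ → ℝ)
    (u u' : ℝ → ℝ) : ℝ :=
  mu * (∫ x in Ioo a b \ D, (u x - ub x) ^ 2) +
    lam * (∫ x in D, (L (u x) - ub x) ^ 2) +
    ∫ x in Ioo a b, (u' x) ^ 2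

theorem exists_minimizer (a b mu lam : ℝ) (hab : a < b) (hmu : 0 < mu) (hlam : 0 < lam)
    (D : Set ℝ) (hD : MeasurableSet D) (hDsub : D ⊆ Ioo a b)
    (hpos : 0 < volume (Ioo a b \ D))
    (ub : ℝ → ℝ) (hub : MemLp ub 2 (volume.restrict (Ioo a b)))
    (L : ℝ → ℝ) (hL : Continuous L) :
    ∃ u u' : ℝ → ℝ, W12 a b u u' ∧
      ∀ v v' : ℝ → ℝ, W12 a b v v' →
        inpaintF a b mu lam D ub L u u' ≤ inpaintF a b mu lam D ub L v v' := by
  classical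
  have hμfin : volume (Ioo a b) ≠ ⊤ := by
    simp [Real.volume_Ioo]
  haveI : IsFiniteMeasure (volume.restrict (Ioo a b)) :=
    ⟨by rwa [Measure.restrict_apply_univ, lt_top_iff_ne_top]⟩
  set V : Set ℝ := {r | ∃ u u', W12 a b u u' ∧ inpaintF a b mu lam D ub L u u' = r} with hV
  have hW0 : W12 a b (fun _ => (0:ℝ)) (fun _ => (0:ℝ)) := by
    refine ⟨fun x _ y _ => by simp, memLp_const 0, memLp_const 0⟩
  have hVne : V.Nonempty := ⟨_, _, _, hW0, rfl⟩
  have hFnn : ∀ u u', 0 ≤ inpaintF a b mu lam D ub L u u' := by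
    intro u u'
    have h1 : 0 ≤ ∫ x in Ioo a b \ D, (u x - ub x) ^ 2 :=
      integral_nonneg fun x => sq_nonneg _
    have h2 : 0 ≤ ∫ x in D, (L (u x) - ub x) ^ 2 := integral_nonneg fun x => sq_nonneg _
    have h3 : 0 ≤ ∫ x in Ioo a b, (u' x) ^ 2 := integral_nonneg fun x => sq_nonneg _
    have := mul_nonneg hmu.le h1
    have := mul_nonneg hlam.le h2
    unfold inpaintF; positivity
  have hVbdd : BddBelow V := ⟨0, fun r ⟨u, u', _, hr⟩ => hr ▸ hFnn u u'⟩
  set m := sInf V with hm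
  have hm0 : 0 ≤ m := le_csInf hVne fun r ⟨u, u', _, hr⟩ => hr ▸ hFnn u u'
  -- minimizing sequence
  have hseq : ∀ n : ℕ, ∃ u u', W12 a b u u' ∧
      inpaintF a b mu lam D ub L u u' < m + 1 / (n + 1) := by
    intro n
    have hlt : m < m + 1 / (n + 1) := by
      have : (0:ℝ) < 1 / (n + 1) := by positivity
      linarith
    obtain ⟨r, hrV, hr⟩ := exists_lt_of_csInf_lt hVne hlt
    obtain ⟨u, u', hW', rfl⟩ := hrV
    exact ⟨u, u', hW', hr⟩
  choose U U' hWU hFU using hseq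
  -- bounds from the energy
  have hterm_le : ∀ n, (∫ x in Ioo a b, (U' n x) ^ 2) ≤ m + 1 ∧
      mu * (∫ x in Ioo a b \ D, (U n x - ub x) ^ 2) ≤ m + 1 := by
    intro n
    have h1 : 0 ≤ ∫ x in Ioo a b \ D, (U n x - ub x) ^ 2 :=
      integral_nonneg fun x => sq_nonneg _
    have h2 : 0 ≤ ∫ x in D, (L (U n x) - ub x) ^ 2 := integral_nonneg fun x => sq_nonneg _
    have h3 : 0 ≤ ∫ x in Ioo a b, (U' n x) ^ 2 := integral_nonneg fun x => sq_nonneg _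
    have hF := hFU n
    have hn1 : (1:ℝ) / (n + 1) ≤ 1 := by
      rw [div_le_one (by positivity)]; push_cast; linarith [Nat.cast_nonneg (α := ℝ) n]
    have hmul1 : 0 ≤ mu * (∫ x in Ioo a b \ D, (U n x - ub x) ^ 2) := mul_nonneg hmu.le h1
    have hmul2 : 0 ≤ lam * (∫ x in D, (L (U n x) - ub x) ^ 2) := mul_nonneg hlam.le h2
    unfold inpaintF at hF
    constructor <;> linarith
  -- L² elements for the derivatives
  set μ₀ := volume.restrict (Ioo a b) with hμ₀
  set g : ℕ → Lp ℝ 2 μ₀ := fun n => ((hWU n).2.2).toLp (U' n) with hg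
  have hcoe : ∀ n, ⇑(g n) =ᵐ[μ₀] U' n := fun n => MemLp.coeFn_toLp _
  have hinner_eq : ∀ f₁ f₂ : Lp ℝ 2 μ₀, ⟪f₁, f₂⟫ = ∫ x, f₁ x * f₂ x ∂μ₀ := by
    intro f₁ f₂
    rw [L2.inner_def]
    refine integral_congr_ae (Eventually.of_forall fun x => ?_)
    simp [RCLike.inner_apply, conj_trivial]; ring
  have hnormsq : ∀ (f : Lp ℝ 2 μ₀) (w : ℝ → ℝ), ⇑f =ᵐ[μ₀] w →
      ‖f‖ ^ 2 = ∫ x in Ioo a b, (w x) ^ 2 := by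
    intro f w hfw
    rw [← real_inner_self_eq_norm_sq, hinner_eq]
    refine integral_congr_ae (hfw.mono fun x hx => ?_)
    simp only []
    rw [hx, sq]
  have hnormg : ∀ n, ‖g n‖ ^ 2 = ∫ x in Ioo a b, (U' n x) ^ 2 :=
    fun n => hnormsq (g n) (U' n) (hcoe n)
  set R := Real.sqrt (m + 1) with hR
  have hgR : ∀ n, ‖g n‖ ≤ R := by
    intro n
    have h1 : ‖g n‖ ^ 2 ≤ m + 1 := (hnormg n) ▸ (hterm_le n).1
    calc ‖g n‖ = Real.sqrt (‖g n‖ ^ 2) := by rw [Real.sqrt_sq (norm_nonneg _)]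
      _ ≤ R := Real.sqrt_le_sqrt h1
  -- Cauchy–Schwarz bound for set integrals
  have hCS : ∀ (f : Lp ℝ 2 μ₀) (t : Set ℝ), MeasurableSet t → t ⊆ Ioo a b →
      |∫ s in t, f s| ≤ ‖f‖ * Real.sqrt (b - a) := by
    intro f t ht hsub
    have hμt : μ₀ t ≠ ⊤ := measure_ne_top μ₀ t
    have hres : volume.restrict t = μ₀.restrict t := by
      rw [hμ₀, Measure.restrict_restrict ht, inter_eq_self_of_subset_left hsub]
    have h1 : (∫ s in t, f s) = ∫ s in t, f s ∂μ₀ := by rw [hres]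
    have h2 : (∫ s in t, f s ∂μ₀) = ⟪indicatorConstLp 2 ht hμt (1:ℝ), f⟫ :=
      (L2.inner_indicatorConstLp_one (𝕜 := ℝ) ht hμt f).symm
    rw [h1, h2]
    have h3 := abs_real_inner_le_norm (indicatorConstLp 2 ht hμt (1:ℝ)) f
    have h4 : ‖indicatorConstLp (E := ℝ) 2 ht hμt (1:ℝ)‖ ≤ Real.sqrt (b - a) := by
      rw [norm_indicatorConstLp (by norm_num) (by norm_num)]
      simp only [norm_one, one_mul]
      have hle : μ₀ t ≤ ENNReal.ofReal (b - a) := by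
        calc μ₀ t ≤ μ₀ (Ioo a b) := measure_mono hsub
          _ ≤ volume (Ioo a b) := by rw [hμ₀]; exact Measure.restrict_le_self _
          _ = ENNReal.ofReal (b - a) := Real.volume_Ioo
      have htoReal : (μ₀ t).toReal ≤ b - a := by
        calc (μ₀ t).toReal ≤ (ENNReal.ofReal (b - a)).toReal :=
              ENNReal.toReal_mono ENNReal.ofReal_ne_top hle
          _ = b - a := ENNReal.toReal_ofReal (by linarith)
      rw [show (1 : ℝ) / (2 : ENNReal).toReal = (1/2 : ℝ) by norm_num, ← Real.sqrt_eq_rpow]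
      exact Real.sqrt_le_sqrt htoReal
    calc |⟪indicatorConstLp 2 ht hμt (1:ℝ), f⟫| ≤
          ‖indicatorConstLp (E := ℝ) 2 ht hμt (1:ℝ)‖ * ‖f‖ := h3
      _ ≤ Real.sqrt (b - a) * ‖f‖ :=
          mul_le_mul_of_nonneg_right h4 (norm_nonneg _)
      _ = ‖f‖ * Real.sqrt (b - a) := mul_comm _ _
  -- interval integral of the derivatives in terms of set integrals of `g n`
  have hIoc_sub : ∀ x ∈ Ioo a b, ∀ y ∈ Ioo a b, Ioc x y ⊆ Ioo a b := by
    intro x hx y hy t ht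
    exact ⟨lt_trans hx.1 ht.1, lt_of_le_of_lt ht.2 hy.2⟩
  have hsetint : ∀ n (t : Set ℝ), MeasurableSet t → t ⊆ Ioo a b →
      (∫ s in t, U' n s) = ∫ s in t, (g n : ℝ → ℝ) s := by
    intro n t ht hsub
    refine integral_congr_ae ?_
    exact ae_restrict_of_ae_restrict_of_subset hsub ((hcoe n).symm)
  have hdiff : ∀ n, ∀ x ∈ Ioo a b, ∀ y ∈ Ioo a b,
      |U n y - U n x| ≤ R * Real.sqrt (b - a) := by
    intro n x hx y hy
    rw [(hWU n).1 x hx y hy]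
    rcases le_total x y with hxy | hxy
    · rw [intervalIntegral.integral_of_le hxy,
        hsetint n _ measurableSet_Ioc (hIoc_sub x hx y hy)]
      exact le_trans (hCS (g n) _ measurableSet_Ioc (hIoc_sub x hx y hy))
        (mul_le_mul_of_nonneg_right (hgR n) (Real.sqrt_nonneg _))
    · rw [intervalIntegral.integral_of_ge hxy, abs_neg,
        hsetint n _ measurableSet_Ioc (hIoc_sub y hy x hx)]
      exact le_trans (hCS (g n) _ measurableSet_Ioc (hIoc_sub y hy x hx))
        (mul_le_mul_of_nonneg_right (hgR n) (Real.sqrt_nonneg _))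
  -- a pointwise bound on the minimizing sequence at some good point
  set S : Set ℝ := Ioo a b \ D with hS
  have hSm : MeasurableSet S := measurableSet_Ioo.diff hD
  have hSsub : S ⊆ Ioo a b := diff_subset
  have hSfin : volume S ≠ ⊤ := by
    refine ne_top_of_le_ne_top hμfin (measure_mono hSsub)
  have hSpos : 0 < (volume S).toReal := ENNReal.toReal_pos hpos.ne' hSfin
  set B := ∫ x in Ioo a b, (ub x) ^ 2 with hB
  have hBnn : 0 ≤ B := integral_nonneg fun x => sq_nonneg _
  set c₁ := (2 * (m + 1) / mu + 2 * B + 1) / (volume S).toReal with hc₁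
  have hc₁nn : 0 ≤ c₁ := by
    have h1 : 0 ≤ 2 * (m + 1) / mu := by positivity
    have : 0 ≤ 2 * (m + 1) / mu + 2 * B + 1 := by linarith
    positivity
  have hpoint : ∀ n, ∃ x ∈ S, (U n x) ^ 2 ≤ c₁ := by
    intro n
    by_contra hcon
    push_neg at hcon
    -- then the integral of (U n)² over S would be too large
    have hUsq_int : IntegrableOn (fun x => (U n x) ^ 2) S volume := by
      have h1 : Integrable (fun x => (U n x) ^ 2) μ₀ := ((hWU n).2.1).integrable_sq
      exact h1.mono_measure (by rw [hμ₀]; exact Measure.restrict_mono hSsub le_rfl)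
    have hub_sq_int : IntegrableOn (fun x => (ub x) ^ 2) S volume := by
      have h1 : Integrable (fun x => (ub x) ^ 2) μ₀ := hub.integrable_sq
      exact h1.mono_measure (by rw [hμ₀]; exact Measure.restrict_mono hSsub le_rfl)
    have hdiff_sq_int : IntegrableOn (fun x => (U n x - ub x) ^ 2) S volume := by
      have h1 : Integrable (fun x => (U n x - ub x) ^ 2) μ₀ :=
        (((hWU n).2.1).sub hub).integrable_sq
      exact h1.mono_measure (by rw [hμ₀]; exact Measure.restrict_mono hSsub le_rfl)
    have hptwise : ∀ x, (U n x) ^ 2 ≤ 2 * (U n x - ub x) ^ 2 + 2 * (ub x) ^ 2 := by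
      intro x; nlinarith [sq_nonneg (U n x - 2 * ub x)]
    have hint1 : (∫ x in S, (U n x) ^ 2) ≤
        ∫ x in S, (2 * (U n x - ub x) ^ 2 + 2 * (ub x) ^ 2) := by
      refine integral_mono hUsq_int ?_ fun x => hptwise x
      exact (hdiff_sq_int.const_mul 2).add (hub_sq_int.const_mul 2)
    have hint2 : (∫ x in S, (2 * (U n x - ub x) ^ 2 + 2 * (ub x) ^ 2)) =
        2 * (∫ x in S, (U n x - ub x) ^ 2) + 2 * ∫ x in S, (ub x) ^ 2 := by
      rw [integral_add (hdiff_sq_int.const_mul 2) (hub_sq_int.const_mul 2),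
        integral_const_mul, integral_const_mul]
    have hub_bound : (∫ x in S, (ub x) ^ 2) ≤ B := by
      rw [hB]
      refine setIntegral_mono_set ?_ ?_ (HasSubset.Subset.eventuallyLE hSsub)
      · exact hub.integrable_sq
      · exact Eventually.of_forall fun x => sq_nonneg _
    have hdiff_bound : (∫ x in S, (U n x - ub x) ^ 2) ≤ (m + 1) / mu := by
      rw [le_div_iff₀ hmu]
      calc (∫ x in S, (U n x - ub x) ^ 2) * mu
          = mu * ∫ x in S, (U n x - ub x) ^ 2 := mul_comm _ _
        _ ≤ m + 1 := (hterm_le n).2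
    have hbig : c₁ * (volume S).toReal ≤ ∫ x in S, (U n x) ^ 2 := by
      refine setIntegral_ge_of_const_le_real hSm hSfin (fun x hx => (hcon x hx).le) hUsq_int
    have hc₁S : c₁ * (volume S).toReal = 2 * (m + 1) / mu + 2 * B + 1 := by
      rw [hc₁, div_mul_cancel₀ _ hSpos.ne']
    rw [hc₁S] at hbig
    have h2m : 2 * ((m + 1) / mu) = 2 * (m + 1) / mu := by ring
    linarith
  -- midpoint and bound at the midpoint
  set x₀ := (a + b) / 2 with hx₀def
  have hx₀ : x₀ ∈ Ioo a b := by constructor <;> (rw [hx₀def]; linarith)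
  set M₀ := Real.sqrt c₁ + R * Real.sqrt (b - a) with hM₀
  have hcbound : ∀ n, |U n x₀| ≤ M₀ := by
    intro n
    obtain ⟨x, hxS, hx⟩ := hpoint n
    have h1 : |U n x| ≤ Real.sqrt c₁ := by
      rw [← Real.sqrt_sq_eq_abs]
      exact Real.sqrt_le_sqrt hx
    have h2 : |U n x₀ - U n x| ≤ R * Real.sqrt (b - a) := hdiff n x (hSsub hxS) x₀ hx₀
    calc |U n x₀| = |U n x + (U n x₀ - U n x)| := by ring_nf
      _ ≤ |U n x| + |U n x₀ - U n x| := abs_add_le _ _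
      _ ≤ M₀ := by rw [hM₀]; linarith
  -- extract a weakly convergent subsequence of the derivatives
  haveI : Fact ((2 : ENNReal) ≠ ⊤) := ⟨ENNReal.ofNat_ne_top⟩
  haveI : SecondCountableTopology (Lp ℝ 2 μ₀) := inferInstance
  obtain ⟨g₀, φ, hφ, hwk⟩ := exists_weak_subseq g R hgR
  -- extract a convergent subsequence of the values at the midpoint
  obtain ⟨c₀, -, ψ, hψ, hcconv⟩ := tendsto_subseq_of_bounded
    (Metric.isBounded_Icc (-M₀) M₀)
    (x := fun n => U (φ n) x₀)
    (fun n => abs_le.1 (hcbound (φ n)))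
  set σ : ℕ → ℕ := φ ∘ ψ with hσ
  have hσmono : StrictMono σ := hφ.comp hψ
  have hwk' : ∀ y : Lp ℝ 2 μ₀, Tendsto (fun n => ⟪g (σ n), y⟫) atTop (𝓝 ⟪g₀, y⟫) :=
    fun y => (hwk y).comp hψ.tendsto_atTop
  have hcconv' : Tendsto (fun n => U (σ n) x₀) atTop (𝓝 c₀) := hcconv
  -- the candidate minimizer
  have hg₀mem : MemLp (⇑g₀) 2 μ₀ := Lp.memLp g₀
  have hg₀int : Integrable (⇑g₀) μ₀ := hg₀mem.integrable one_le_two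
  set h : ℝ → ℝ := (Ioo a b).indicator ⇑g₀ with hh
  have hhint : Integrable h volume := by
    rw [hh]
    exact (IntegrableOn.integrable_indicator hg₀int measurableSet_Ioo)
  have hheq : ∀ x ∈ Ioo a b, h x = g₀ x := fun x hx => indicator_of_mem hx _
  have hhae : h =ᵐ[μ₀] ⇑g₀ :=
    (ae_restrict_mem (μ := volume) measurableSet_Ioo).mono fun x hx => hheq x hx
  set u : ℝ → ℝ := fun x => c₀ + ∫ t in x₀..x, h t with hu
  have hucont : Continuous u := by
    rw [hu]
    exact continuous_const.add (hhint.continuous_primitive x₀)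
  -- set-integral convergence along the subsequence
  have hsetconv : ∀ t : Set ℝ, MeasurableSet t → t ⊆ Ioo a b →
      Tendsto (fun n => ∫ s in t, U' (σ n) s) atTop (𝓝 (∫ s in t, (g₀ : ℝ → ℝ) s)) := by
    intro t ht hsub
    have hμt : μ₀ t ≠ ⊤ := measure_ne_top μ₀ t
    have hres : volume.restrict t = μ₀.restrict t := by
      rw [hμ₀, Measure.restrict_restrict ht, inter_eq_self_of_subset_left hsub]
    have key : ∀ f : Lp ℝ 2 μ₀, (∫ s in t, (f : ℝ → ℝ) s) = ⟪g₀, g₀⟫ → True := fun _ _ => trivial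
    have heq1 : ∀ n, (∫ s in t, U' (σ n) s) = ⟪g (σ n), indicatorConstLp 2 ht hμt (1:ℝ)⟫ := by
      intro n
      rw [hsetint (σ n) t ht hsub, real_inner_comm,
        L2.inner_indicatorConstLp_one (𝕜 := ℝ) ht hμt (g (σ n)), ← hres]
    have heq2 : (∫ s in t, (g₀ : ℝ → ℝ) s) = ⟪g₀, indicatorConstLp 2 ht hμt (1:ℝ)⟫ := by
      rw [real_inner_comm, L2.inner_indicatorConstLp_one (𝕜 := ℝ) ht hμt g₀, ← hres]
    rw [heq2]
    simp_rw [heq1]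
    exact hwk' _
  -- interval-integral convergence
  have hintconv : ∀ x ∈ Ioo a b, Tendsto (fun n => ∫ t in x₀..x, U' (σ n) t) atTop
      (𝓝 (∫ t in x₀..x, h t)) := by
    intro x hx
    rcases le_total x₀ x with hxy | hxy
    · have hsub' : Ioc x₀ x ⊆ Ioo a b := hIoc_sub x₀ hx₀ x hx
      have e1 : (∫ t in x₀..x, h t) = ∫ t in Ioc x₀ x, (g₀ : ℝ → ℝ) t := by
        rw [intervalIntegral.integral_of_le hxy]
        exact setIntegral_congr_fun measurableSet_Ioc fun t ht => hheq t (hsub' ht)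
      have e2 : ∀ n, (∫ t in x₀..x, U' (σ n) t) = ∫ t in Ioc x₀ x, U' (σ n) t := by
        intro n; rw [intervalIntegral.integral_of_le hxy]
      rw [e1]
      simp_rw [e2]
      exact hsetconv _ measurableSet_Ioc hsub'
    · have hsub' : Ioc x x₀ ⊆ Ioo a b := hIoc_sub x hx x₀ hx₀
      have e1 : (∫ t in x₀..x, h t) = -∫ t in Ioc x x₀, (g₀ : ℝ → ℝ) t := by
        rw [intervalIntegral.integral_of_ge hxy]
        congr 1
        exact setIntegral_congr_fun measurableSet_Ioc fun t ht => hheq t (hsub' ht)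
      have e2 : ∀ n, (∫ t in x₀..x, U' (σ n) t) = -∫ t in Ioc x x₀, U' (σ n) t := by
        intro n; rw [intervalIntegral.integral_of_ge hxy]
      rw [e1]
      simp_rw [e2]
      exact (hsetconv _ measurableSet_Ioc hsub').neg
  -- pointwise convergence of the minimizing sequence to u
  have hUconv : ∀ x ∈ Ioo a b, Tendsto (fun n => U (σ n) x) atTop (𝓝 (u x)) := by
    intro x hx
    have heq : ∀ n, U (σ n) x = U (σ n) x₀ + ∫ t in x₀..x, U' (σ n) t := by
      intro n
      have := (hWU (σ n)).1 x₀ hx₀ x hx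
      linarith
    simp_rw [heq]
    exact hcconv'.add (hintconv x hx)
  -- uniform bound
  set M := M₀ + R * Real.sqrt (b - a) with hM
  have hUbd : ∀ n, ∀ x ∈ Ioo a b, |U (σ n) x| ≤ M := by
    intro n x hx
    have h1 := hcbound (σ n)
    have h2 := hdiff (σ n) x₀ hx₀ x hx
    calc |U (σ n) x| = |U (σ n) x₀ + (U (σ n) x - U (σ n) x₀)| := by ring_nf
      _ ≤ |U (σ n) x₀| + |U (σ n) x - U (σ n) x₀| := abs_add_le _ _
      _ ≤ M := by rw [hM]; linarith
  have hubd : ∀ x ∈ Ioo a b, |u x| ≤ M := by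
    intro x hx
    exact le_of_tendsto ((hUconv x hx).abs) (Eventually.of_forall fun n => hUbd n x hx)
  -- the limit pair is in W^{1,2}
  have hueval : ∀ z, u z = c₀ + ∫ t in x₀..z, h t := fun z => rfl
  have hFTCu : ∀ x ∈ Ioo a b, ∀ y ∈ Ioo a b, u y - u x = ∫ t in x..y, h t := by
    intro x hx y hy
    have hadj := intervalIntegral.integral_add_adjacent_intervals
      (hhint.intervalIntegrable (a := x₀) (b := x)) (hhint.intervalIntegrable (a := x) (b := y))
    rw [hueval x, hueval y]
    linarith
  have hMemu : MemLp u 2 μ₀ := by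
    refine MemLp.of_bound hucont.aestronglyMeasurable (|c₀| + ∫ t, |h t|) ?_
    refine ae_of_all _ fun x => ?_
    rw [Real.norm_eq_abs, hueval x]
    have h1 : |∫ t in x₀..x, h t| ≤ ∫ t in Set.uIoc x₀ x, |h t| := by
      simpa [Real.norm_eq_abs] using
        intervalIntegral.norm_integral_le_integral_norm_uIoc (f := h) (a := x₀) (b := x)
        (μ := volume)
    have h2 : (∫ t in Set.uIoc x₀ x, |h t|) ≤ ∫ t, |h t| := by
      refine setIntegral_le_integral hhint.abs (Eventually.of_forall fun t => abs_nonneg _)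
    calc |c₀ + ∫ t in x₀..x, h t| ≤ |c₀| + |∫ t in x₀..x, h t| := abs_add_le _ _
      _ ≤ |c₀| + ∫ t, |h t| := by linarith
  have hMemh : MemLp h 2 μ₀ := hg₀mem.ae_eq hhae.symm
  have hnormg₀ : ‖g₀‖ ^ 2 = ∫ x in Ioo a b, (h x) ^ 2 := hnormsq g₀ h hhae.symm
  -- measurability helpers
  have haesm : ∀ (w : ℝ → ℝ), MemLp w 2 μ₀ → ∀ t : Set ℝ, t ⊆ Ioo a b →
      AEStronglyMeasurable w (volume.restrict t) := by
    intro w hw t hsub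
    exact hw.aestronglyMeasurable.mono_measure (Measure.restrict_mono hsub le_rfl)
  -- bound for `L` on the relevant compact interval
  obtain ⟨K, hK⟩ := (isCompact_Icc (a := -M) (b := M)).exists_bound_of_continuousOn
    hL.continuousOn
  -- dominated convergence for the first term
  have hboundint : ∀ (K' : ℝ) (t : Set ℝ), t ⊆ Ioo a b →
      Integrable (fun x => (K' + |ub x|) ^ 2) (volume.restrict t) := by
    intro K' t hsub
    have h1 : MemLp (fun x => K' + |ub x|) 2 μ₀ := by
      have h2 : MemLp (fun x => |ub x|) 2 μ₀ := by
        simpa [Real.norm_eq_abs] using hub.norm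
      exact (memLp_const K').add h2
    exact h1.integrable_sq.mono_measure (Measure.restrict_mono hsub le_rfl)
  have t1conv : Tendsto (fun n => ∫ x in Ioo a b \ D, (U (σ n) x - ub x) ^ 2) atTop
      (𝓝 (∫ x in Ioo a b \ D, (u x - ub x) ^ 2)) := by
    refine tendsto_integral_of_dominated_convergence (fun x => (M + |ub x|) ^ 2)
      (fun n => ?_) (hboundint M _ hSsub) (fun n => ?_) ?_
    · have h1 := haesm (U (σ n)) (hWU (σ n)).2.1 _ hSsub
      have h2 := haesm ub hub _ hSsub
      have h3 := (h1.sub h2).mul (h1.sub h2)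
      simp only [sq]; exact h3
    · refine (ae_restrict_iff' hSm).2 (ae_of_all _ fun x hx => ?_)
      have h1 : |U (σ n) x| ≤ M := hUbd n x (hSsub hx)
      have h2 : |U (σ n) x - ub x| ≤ M + |ub x| := by
        calc |U (σ n) x - ub x| ≤ |U (σ n) x| + |ub x| := abs_sub _ _
          _ ≤ M + |ub x| := by linarith
      rw [Real.norm_eq_abs, abs_of_nonneg (sq_nonneg _)]
      have h3 := abs_le.1 h2
      exact sq_le_sq' h3.1 h3.2
    · refine (ae_restrict_iff' hSm).2 (ae_of_all _ fun x hx => ?_)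
      exact ((hUconv x (hSsub hx)).sub tendsto_const_nhds).pow 2
  have t2conv : Tendsto (fun n => ∫ x in D, (L (U (σ n) x) - ub x) ^ 2) atTop
      (𝓝 (∫ x in D, (L (u x) - ub x) ^ 2)) := by
    refine tendsto_integral_of_dominated_convergence (fun x => (K + |ub x|) ^ 2)
      (fun n => ?_) (hboundint K _ hDsub) (fun n => ?_) ?_
    · have h1 := haesm (U (σ n)) (hWU (σ n)).2.1 _ hDsub
      have h1' : AEStronglyMeasurable (fun x => L (U (σ n) x)) (volume.restrict D) :=
        hL.comp_aestronglyMeasurable h1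
      have h2 := haesm ub hub _ hDsub
      have h3 := (h1'.sub h2).mul (h1'.sub h2)
      simp only [sq]; exact h3
    · refine (ae_restrict_iff' hD).2 (ae_of_all _ fun x hx => ?_)
      have h1 : |U (σ n) x| ≤ M := hUbd n x (hDsub hx)
      have hKx : |L (U (σ n) x)| ≤ K := by
        have := hK (U (σ n) x) (abs_le.1 h1)
        simpa [Real.norm_eq_abs] using this
      have h2 : |L (U (σ n) x) - ub x| ≤ K + |ub x| := by
        calc |L (U (σ n) x) - ub x| ≤ |L (U (σ n) x)| + |ub x| := abs_sub _ _

          _ ≤ K + |ub x| := by linarith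
      rw [Real.norm_eq_abs, abs_of_nonneg (sq_nonneg _)]
      have h3 := abs_le.1 h2
      exact sq_le_sq' h3.1 h3.2
    · refine (ae_restrict_iff' hD).2 (ae_of_all _ fun x hx => ?_)
      have h1 : Tendsto (fun n => L (U (σ n) x)) atTop (𝓝 (L (u x))) :=
        (hL.tendsto (u x)).comp (hUconv x (hDsub hx))
      exact (h1.sub tendsto_const_nhds).pow 2
  -- the key lower-semicontinuity inequality
  have hexp : ∀ p q : Lp ℝ 2 μ₀, 2 * ⟪p, q⟫ - ‖q‖ ^ 2 ≤ ‖p‖ ^ 2 := by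
    intro p q
    have h0 : (0:ℝ) ≤ ⟪p - q, p - q⟫ := real_inner_self_nonneg
    have h1 : ⟪p - q, p - q⟫ = ‖p‖ ^ 2 - 2 * ⟪p, q⟫ + ‖q‖ ^ 2 := by
      rw [inner_sub_left, inner_sub_right, inner_sub_right,
        real_inner_self_eq_norm_sq, real_inner_self_eq_norm_sq, real_inner_comm q p]
      ring
    linarith
  have hkey : ∀ n, mu * (∫ x in Ioo a b \ D, (U (σ n) x - ub x) ^ 2) +
      lam * (∫ x in D, (L (U (σ n) x) - ub x) ^ 2) +
      (2 * ⟪g (σ n), g₀⟫ - ‖g₀‖ ^ 2) ≤ m + 1 / (σ n + 1) := by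
    intro n
    have h1 := hFU (σ n)
    unfold inpaintF at h1
    have h2 : 2 * ⟪g (σ n), g₀⟫ - ‖g₀‖ ^ 2 ≤ ∫ x in Ioo a b, (U' (σ n) x) ^ 2 := by
      rw [← hnormg (σ n)]
      exact hexp _ _
    linarith
  have hinnval : 2 * ⟪g₀, g₀⟫ - ‖g₀‖ ^ 2 = ‖g₀‖ ^ 2 := by
    rw [real_inner_self_eq_norm_sq]; ring
  have hLHS : Tendsto (fun n => mu * (∫ x in Ioo a b \ D, (U (σ n) x - ub x) ^ 2) +
      lam * (∫ x in D, (L (U (σ n) x) - ub x) ^ 2) +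
      (2 * ⟪g (σ n), g₀⟫ - ‖g₀‖ ^ 2)) atTop
      (𝓝 (mu * (∫ x in Ioo a b \ D, (u x - ub x) ^ 2) +
        lam * (∫ x in D, (L (u x) - ub x) ^ 2) + ‖g₀‖ ^ 2)) := by
    have hcomp := ((t1conv.const_mul mu).add (t2conv.const_mul lam)).add
      (((hwk' g₀).const_mul 2).sub (tendsto_const_nhds (x := ‖g₀‖ ^ 2)))
    rw [hinnval] at hcomp
    exact hcomp
  have hRHS : Tendsto (fun n : ℕ => m + 1 / ((σ n : ℝ) + 1)) atTop (𝓝 m) := by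
    have h0 : Tendsto (fun n : ℕ => 1 / ((σ n : ℝ) + 1)) atTop (𝓝 0) := by
      refine squeeze_zero (fun n => by positivity) (fun n => ?_)
        tendsto_one_div_add_atTop_nhds_zero_nat
      have hσn : (n : ℝ) ≤ (σ n : ℝ) := by exact_mod_cast hσmono.le_apply
      apply one_div_le_one_div_of_le (by positivity)
      linarith
    simpa using tendsto_const_nhds.add h0
  have hfin : mu * (∫ x in Ioo a b \ D, (u x - ub x) ^ 2) +
      lam * (∫ x in D, (L (u x) - ub x) ^ 2) + ‖g₀‖ ^ 2 ≤ m :=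
    le_of_tendsto_of_tendsto' hLHS hRHS hkey
  -- conclusion
  refine ⟨u, h, ⟨hFTCu, hMemu, hMemh⟩, fun v v' hv => ?_⟩
  have hvV : inpaintF a b mu lam D ub L v v' ∈ V := ⟨v, v', hv, rfl⟩
  have hFu : inpaintF a b mu lam D ub L u h =
      mu * (∫ x in Ioo a b \ D, (u x - ub x) ^ 2) +
      lam * (∫ x in D, (L (u x) - ub x) ^ 2) + ‖g₀‖ ^ 2 := by
    unfold inpaintF
    rw [hnormg₀]
  rw [hFu]
  exact le_trans hfin (csInf_le hVbdd hvV)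
end

section
/- Let Ω = (a,b) be a bounded open interval and S ⊆ Ω a measurable set with |S| > 0. Then there exists a constant C > 0, depending only on Ω and S, such that for every absolutely continuous u : Ω → ℝ with u' ∈ L²(Ω), ∫_Ω |u(x)|² dx ≤ C ( ∫_Ω |u'(x)|² dx + ∫_S |u(x)|² dx ). -/
/- STATEMENT 7 (Poincaré-type inequality): Let Ω = (a,b) be a bounded open interval and
S ⊆ Ω measurable with |S| > 0. Then there is C > 0, depending only on Ω and S, such that
for every absolutely continuous u : ℝ → ℝ with a.e. derivative u' ∈ L²(Ω),
∫_Ω |u|² ≤ C (∫_Ω |u'|² + ∫_S |u|²). -/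

open MeasureTheory Set
open scoped Interval

/-- Cauchy–Schwarz for set integrals: `(∫_A f)² ≤ |A| ∫_A f²`. -/
lemma cs_aux {f : ℝ → ℝ} {A : Set ℝ} (hA : MeasurableSet A) (hAfin : volume A ≠ ⊤)
    (hf : IntegrableOn f A) (hf2 : IntegrableOn (fun x => f x ^ 2) A) :
    (∫ x in A, f x) ^ 2 ≤ (volume A).toReal * ∫ x in A, f x ^ 2 := by
  set v := (volume A).toReal with hv
  set m := ∫ x in A, f x with hm
  set X := ∫ x in A, f x ^ 2 with hX
  have hX0 : 0 ≤ X := setIntegral_nonneg hA fun x _ => sq_nonneg _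
  have hv0 : 0 ≤ v := ENNReal.toReal_nonneg
  rcases eq_or_lt_of_le hv0 with hv0' | hvpos
  · -- measure zero case
    have hA0 : volume A = 0 := by
      have := ENNReal.toReal_eq_zero_iff (volume A)
      rw [← hv, ← hv0'] at this
      rcases this.mp rfl with h | h
      · exact h
      · exact absurd h hAfin
    have hm0 : m = 0 := by
      rw [hm, Measure.restrict_eq_zero.2 hA0, integral_zero_measure]
    rw [hm0, ← hv0']
    simp
  · have h0 : 0 ≤ ∫ x in A, (v * f x - m) ^ 2 :=
      setIntegral_nonneg hA fun x _ => sq_nonneg _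
    have hconst : IntegrableOn (fun _ : ℝ => (m : ℝ) ^ 2) A :=
      integrableOn_const hAfin
    have h1 : IntegrableOn (fun x => v ^ 2 * f x ^ 2 - 2 * v * m * f x) A :=
      (hf2.const_mul _).sub (hf.const_mul _)
    have hexp : ∫ x in A, (v * f x - m) ^ 2 = v ^ 2 * X - 2 * v * m * m + m ^ 2 * v := by
      have e : ∀ x, (v * f x - m) ^ 2
          = v ^ 2 * f x ^ 2 - 2 * v * m * f x + m ^ 2 := fun x => by ring
      simp_rw [e]
      rw [integral_add h1 hconst, integral_sub (hf2.const_mul _) (hf.const_mul _),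
        integral_const_mul, integral_const_mul, setIntegral_const]
      simp only [smul_eq_mul, measureReal_def, ← hv, ← hm, ← hX]
      ring
    rw [hexp] at h0
    nlinarith [mul_pos hvpos hvpos]

theorem poincare_type (a b : ℝ) (hab : a < b)
    (S : Set ℝ) (hS : MeasurableSet S) (hSsub : S ⊆ Ioo a b) (hSpos : 0 < volume S) :
    ∃ C : ℝ, 0 < C ∧
      ∀ u u' : ℝ → ℝ,
        (∀ x ∈ Ioo a b, ∀ y ∈ Ioo a b, u y - u x = ∫ t in x..y, u' t) →
        MemLp u' 2 (volume.restrict (Ioo a b)) →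
        (∫ x in Ioo a b, (u x) ^ 2) ≤
          C * ((∫ x in Ioo a b, (u' x) ^ 2) + ∫ x in S, (u x) ^ 2) := by
  set L := b - a with hLdef
  have hL : 0 < L := sub_pos.2 hab
  have hSfin : volume S ≠ ⊤ :=
    ((measure_mono hSsub).trans_lt measure_Ioo_lt_top).ne
  set s := (volume S).toReal with hsdef
  have hs : 0 < s := ENNReal.toReal_pos hSpos.ne' hSfin
  refine ⟨2 * L * L + 2 * L / s, by positivity, ?_⟩
  intro u u' hftc hu'
  haveI : IsFiniteMeasure (volume.restrict (Ioo a b)) :=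
    ⟨by rw [Measure.restrict_apply_univ]; exact measure_Ioo_lt_top⟩
  have hu'int : IntegrableOn u' (Ioo a b) := hu'.integrable one_le_two
  have hu'2int : IntegrableOn (fun x => u' x ^ 2) (Ioo a b) := hu'.integrable_sq
  set I := ∫ x in Ioo a b, u' x ^ 2 with hIdef
  set J := ∫ x in S, u x ^ 2 with hJdef
  have hI0 : 0 ≤ I := setIntegral_nonneg measurableSet_Ioo fun x _ => sq_nonneg _
  -- Cauchy–Schwarz for interval integrals of u'
  have hcs : ∀ x ∈ Ioo a b, ∀ y ∈ Ioo a b,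
      (∫ t in x..y, u' t) ^ 2 ≤ |y - x| * I := by
    intro x hx y hy
    have hsub : Ι x y ⊆ Ioo a b := by
      intro t ht
      rw [Set.mem_uIoc] at ht
      rcases ht with ⟨h1, h2⟩ | ⟨h1, h2⟩
      · exact ⟨lt_trans hx.1 h1, lt_of_le_of_lt h2 hy.2⟩
      · exact ⟨lt_trans hy.1 h1, lt_of_le_of_lt h2 hx.2⟩
    have hAm : MeasurableSet (Ι x y) := measurableSet_uIoc
    have hAfin : volume (Ι x y) ≠ ⊤ :=
      ((measure_mono hsub).trans_lt measure_Ioo_lt_top).ne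
    have hvol : (volume (Ι x y)).toReal = |y - x| := by
      rw [Set.uIoc, Real.volume_Ioc, ENNReal.toReal_ofReal (by
        simp [sub_nonneg, min_le_max])]
      exact max_sub_min_eq_abs x y
    have hsq : (∫ t in x..y, u' t) ^ 2 = (∫ t in Ι x y, u' t) ^ 2 := by
      rw [intervalIntegral.intervalIntegral_eq_integral_uIoc]
      split_ifs <;> simp [neg_sq]
    rw [hsq]
    calc (∫ t in Ι x y, u' t) ^ 2
        ≤ (volume (Ι x y)).toReal * ∫ t in Ι x y, u' t ^ 2 :=
          cs_aux hAm hAfin (hu'int.mono_set hsub) (hu'2int.mono_set hsub)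
      _ ≤ |y - x| * I := by
          rw [hvol]
          refine mul_le_mul_of_nonneg_left ?_ (abs_nonneg _)
          exact setIntegral_mono_set hu'2int
            (Filter.Eventually.of_forall fun t => sq_nonneg _)
            (HasSubset.Subset.eventuallyLE hsub)
  -- key pointwise inequality
  have hkey : ∀ x ∈ Ioo a b, ∀ y ∈ Ioo a b,
      u x ^ 2 ≤ 2 * u y ^ 2 + 2 * L * I := by
    intro x hx y hy
    have hft := hftc y hy x hx
    set c := ∫ t in y..x, u' t with hc
    have hc2 : c ^ 2 ≤ |x - y| * I := hcs y hy x hx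
    have habs : |x - y| ≤ L := by
      rw [abs_sub_le_iff]
      exact ⟨by rw [hLdef]; linarith [hx.2, hy.1], by rw [hLdef]; linarith [hy.2, hx.1]⟩
    have hux : u x = u y + c := by linarith [hft]
    have hcL : c ^ 2 ≤ L * I := hc2.trans (mul_le_mul_of_nonneg_right habs hI0)
    have hsqx : u x ^ 2 = (u y + c) ^ 2 := by rw [hux]
    nlinarith [hsqx, sq_nonneg (u y - c), hcL]
  -- continuity of u on Ioo a b
  have hcont : ContinuousOn u (Ioo a b) := by
    intro x hx
    rw [Metric.continuousWithinAt_iff]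
    intro ε hε
    refine ⟨ε ^ 2 / (I + 1), by positivity, fun y hy hdist => ?_⟩
    have h1 : (u y - u x) ^ 2 ≤ |y - x| * I := by
      rw [hftc x hx y hy]
      exact hcs x hx y hy
    rw [Real.dist_eq] at hdist ⊢
    have h2 : |y - x| * I ≤ (ε ^ 2 / (I + 1)) * I :=
      mul_le_mul_of_nonneg_right hdist.le hI0
    have h3 : (ε ^ 2 / (I + 1)) * I < ε ^ 2 := by
      rw [div_mul_eq_mul_div, div_lt_iff₀ (by positivity)]
      nlinarith [sq_nonneg ε]
    have h4 : (u y - u x) ^ 2 < ε ^ 2 := by linarith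
    nlinarith [abs_nonneg (u y - u x), sq_abs (u y - u x)]
  have hmeas : AEMeasurable u (volume.restrict (Ioo a b)) :=
    hcont.aemeasurable measurableSet_Ioo
  -- boundedness and integrability of u²
  obtain ⟨y0, hy0S⟩ := nonempty_of_measure_ne_zero hSpos.ne'
  have hy0 : y0 ∈ Ioo a b := hSsub hy0S
  set M := 2 * u y0 ^ 2 + 2 * L * I with hM
  have hM0 : 0 ≤ M := by nlinarith [sq_nonneg (u y0), mul_nonneg hL.le hI0]
  have hu2int : IntegrableOn (fun x => u x ^ 2) (Ioo a b) := by
    refine Integrable.mono' (integrable_const M)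
      ((hmeas.pow_const 2).aestronglyMeasurable) ?_
    filter_upwards [ae_restrict_mem measurableSet_Ioo] with x hx
    rw [Real.norm_eq_abs, abs_of_nonneg (sq_nonneg _)]
    exact hkey x hx y0 hy0
  have hu2S : IntegrableOn (fun x => u x ^ 2) S := hu2int.mono_set hSsub
  have hJ0 : 0 ≤ J := setIntegral_nonneg hS fun x _ => sq_nonneg _
  -- integrate the key inequality over y ∈ S
  have hstep6 : ∀ x ∈ Ioo a b, s * u x ^ 2 ≤ 2 * J + 2 * L * I * s := by
    intro x hx
    have hmono : ∫ _ in S, u x ^ 2 ≤ ∫ y in S, (2 * u y ^ 2 + 2 * L * I) := by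
      refine setIntegral_mono_on (integrableOn_const hSfin)
        ((hu2S.const_mul 2).add (integrableOn_const hSfin)) hS
        fun y hy => hkey x hx y (hSsub hy)
    rw [setIntegral_const, smul_eq_mul] at hmono
    rw [integral_add (hu2S.const_mul 2) (integrableOn_const hSfin),
      integral_const_mul, setIntegral_const, smul_eq_mul] at hmono
    simp only [measureReal_def, ← hsdef, ← hJdef] at hmono
    nlinarith [hmono]
  -- integrate over x ∈ Ω
  have hstep7 : s * ∫ x in Ioo a b, u x ^ 2 ≤ L * (2 * J + 2 * L * I * s) := by
    have hmono : ∫ x in Ioo a b, s * u x ^ 2 ≤ ∫ _ in Ioo a b, (2 * J + 2 * L * I * s) := by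
      refine setIntegral_mono_on (hu2int.const_mul s)
        (integrableOn_const measure_Ioo_lt_top.ne) measurableSet_Ioo
        fun x hx => hstep6 x hx
    rw [integral_const_mul, setIntegral_const, smul_eq_mul, measureReal_def, Real.volume_Ioo,
      ENNReal.toReal_ofReal hL.le] at hmono
    exact hmono
  have hsC : s * (2 * L * L + 2 * L / s) = 2 * L * L * s + 2 * L := by
    field_simp
  have hfin : L * (2 * J + 2 * L * I * s) ≤ s * ((2 * L * L + 2 * L / s) * (I + J)) := by
    rw [← mul_assoc, hsC]
    nlinarith [mul_nonneg (mul_nonneg hL.le hL.le) (mul_nonneg hs.le hJ0),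
      mul_nonneg hL.le hI0]
  exact (mul_le_mul_iff_right₀ hs).mp (hstep7.trans hfin)
end

section
/- Let D ⊆ ℝ be measurable, ū ∈ L²(D), and let 𝓛 ∈ C¹(ℝ) with 𝓛 and 𝓛' bounded. Then the functional G : L²(D) → ℝ defined by G(u) = ∫_D |𝓛(u(x)) − ū(x)|² dx is Gateaux differentiable at every u ∈ L²(D), with derivative in direction v ∈ L²(D) given by G'(u)[v] = 2 ∫_D (𝓛(u(x)) − ū(x)) 𝓛'(u(x)) v(x) dx; that is, lim_{s→0} (G(u + s v) − G(u))/s = 2 ∫_D (𝓛(u) − ū) 𝓛'(u) v dx. -/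
/- STATEMENT 10 (Gateaux differentiability of the nonlinear fidelity term): Let D ⊆ ℝ be
measurable (of finite measure, so that G(u) = ∫_D |𝓛(u)-ū|² is real-valued on L²(D)),
ū ∈ L²(D), 𝓛 ∈ C¹ with 𝓛, 𝓛' bounded. Then for every u, v ∈ L²(D),
lim_{s→0} (G(u+sv) - G(u))/s = 2 ∫_D (𝓛(u)-ū) 𝓛'(u) v. -/

open MeasureTheory Set Filter

private lemma integrable_mul_of_memL2 {α : Type*} [MeasurableSpace α] {μ : Measure α}
    {f g : α → ℝ} (hf : MemLp f 2 μ) (hg : MemLp g 2 μ) :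
    Integrable (fun x => f x * g x) μ := by
  refine Integrable.mono' ((hf.integrable_sq.add hg.integrable_sq).div_const 2)
    (hf.1.mul hg.1) ?_
  filter_upwards with x
  simp only [Pi.add_apply, Pi.div_apply, Real.norm_eq_abs, abs_mul]
  nlinarith [sq_nonneg (|f x| - |g x|), sq_abs (f x), sq_abs (g x), abs_nonneg (f x), abs_nonneg (g x)]

theorem gateaux_differentiable_fidelity
    (D : Set ℝ) (hD : MeasurableSet D) (hDfin : volume D ≠ ⊤)
    (ub : ℝ → ℝ) (hub : MemLp ub 2 (volume.restrict D))
    (L : ℝ → ℝ) (hL : ContDiff ℝ 1 L)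
    (M : ℝ) (hLbd : ∀ t : ℝ, |L t| ≤ M ∧ |deriv L t| ≤ M)
    (u v : ℝ → ℝ)
    (hu : MemLp u 2 (volume.restrict D)) (hv : MemLp v 2 (volume.restrict D)) :
    Tendsto
      (fun s : ℝ =>
        ((∫ x in D, (L (u x + s * v x) - ub x) ^ 2) - ∫ x in D, (L (u x) - ub x) ^ 2) / s)
      (nhdsWithin 0 {(0 : ℝ)}ᶜ)
      (nhds (2 * ∫ x in D, (L (u x) - ub x) * deriv L (u x) * v x)) := by
  set μ := volume.restrict D with hμ
  haveI : IsFiniteMeasure μ := ⟨by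
    rw [hμ, Measure.restrict_apply_univ]; exact lt_top_iff_ne_top.2 hDfin⟩
  have hM0 : 0 ≤ M := le_trans (abs_nonneg _) (hLbd 0).1
  have hLc : Continuous L := hL.continuous
  have hL'c : Continuous (deriv L) := hL.continuous_deriv le_rfl
  -- measurability
  have hum : AEStronglyMeasurable u μ := hu.1
  have hvm : AEStronglyMeasurable v μ := hv.1
  have hubm : AEStronglyMeasurable ub μ := hub.1
  set F : ℝ → ℝ → ℝ := fun s x => (L (u x + s * v x) - ub x) ^ 2 with hF
  set F' : ℝ → ℝ → ℝ := fun s x =>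
    2 * ((L (u x + s * v x) - ub x) * deriv L (u x + s * v x) * v x) with hF'
  have haff : ∀ s : ℝ, AEStronglyMeasurable (fun x => u x + s * v x) μ :=
    fun s => hum.add (hvm.const_smul s)
  have hFmeas : ∀ s : ℝ, AEStronglyMeasurable (F s) μ := fun s =>
    ((hLc.comp_aestronglyMeasurable (haff s)).sub hubm).pow 2
  have hF'meas : AEStronglyMeasurable (F' 0) μ := by
    exact (( ((hLc.comp_aestronglyMeasurable (haff 0)).sub hubm).mul
      (hL'c.comp_aestronglyMeasurable (haff 0))).mul hvm).const_mul 2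
  -- integrability of F 0
  have hLu : MemLp (fun x => L (u x) - ub x) 2 μ := by
    have h1 : MemLp (fun x => L (u x)) 2 μ :=
      MemLp.of_bound (hLc.comp_aestronglyMeasurable hum) M
        (Filter.Eventually.of_forall fun x => (hLbd (u x)).1)
    exact h1.sub hub
  have hFint : Integrable (F 0) μ := by
    have := integrable_mul_of_memL2 hLu hLu
    refine this.congr (Filter.Eventually.of_forall fun x => ?_)
    simp [hF, sq, zero_mul, add_zero]
  -- bound
  set bound : ℝ → ℝ := fun x => 2 * M * ((M + |ub x|) * |v x|) with hbd
  have hboundint : Integrable bound μ := by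
    have h1 : MemLp (fun x => M + |ub x|) 2 μ := (memLp_const M).add hub.abs
    exact ((integrable_mul_of_memL2 h1 hv.abs).const_mul (2 * M))
  have hbound : ∀ᵐ x ∂μ, ∀ s ∈ Metric.ball (0:ℝ) 1, ‖F' s x‖ ≤ bound x := by
    refine Filter.Eventually.of_forall fun x s _ => ?_
    have h1 : |L (u x + s * v x) - ub x| ≤ M + |ub x| :=
      le_trans (abs_sub _ _) (by have := (hLbd (u x + s * v x)).1; linarith)
    have h2 : |deriv L (u x + s * v x)| ≤ M := (hLbd _).2
    have h3 : (0:ℝ) ≤ |v x| := abs_nonneg _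
    have h4 : (0:ℝ) ≤ |L (u x + s * v x) - ub x| := abs_nonneg _
    have h5 : (0:ℝ) ≤ |deriv L (u x + s * v x)| := abs_nonneg _
    have : ‖F' s x‖ = 2 * (|L (u x + s * v x) - ub x| * |deriv L (u x + s * v x)| * |v x|) := by
      simp [hF', Real.norm_eq_abs, abs_mul]
    rw [this, hbd]
    show _ ≤ 2 * M * ((M + |ub x|) * |v x|)
    nlinarith [mul_le_mul_of_nonneg_right
      (mul_le_mul h1 h2 h5 (by linarith : (0:ℝ) ≤ M + |ub x|)) h3]
  -- differentiability
  have hdiff : ∀ᵐ x ∂μ, ∀ s ∈ Metric.ball (0:ℝ) 1, HasDerivAt (fun s => F s x) (F' s x) s := by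
    refine Filter.Eventually.of_forall fun x s _ => ?_
    have h1 : HasDerivAt (fun s : ℝ => u x + s * v x) (v x) s := by
      simpa using ((hasDerivAt_id s).mul_const (v x)).const_add (u x)
    have h2 : HasDerivAt L (deriv L (u x + s * v x)) (u x + s * v x) :=
      ((hL.differentiable one_ne_zero) _).hasDerivAt
    have h3 : HasDerivAt (fun s : ℝ => L (u x + s * v x) - ub x)
        (deriv L (u x + s * v x) * v x) s := (h2.comp s h1).sub_const _
    have h4 := h3.pow 2
    exact h4.congr_deriv (by
      simp only [hF']; rw [show (2:ℕ) - 1 = 1 from rfl, pow_one]; push_cast; ring)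
  have key := hasDerivAt_integral_of_dominated_loc_of_deriv_le (μ := μ)
    (F := F) (F' := F') (x₀ := (0:ℝ)) (bound := bound) (Metric.ball_mem_nhds 0 one_pos)
    (Filter.Eventually.of_forall hFmeas) hFint hF'meas hbound hboundint hdiff
  have hderiv := key.2
  rw [hasDerivAt_iff_tendsto_slope] at hderiv
  have heq : ∫ x, F' 0 x ∂μ = 2 * ∫ x in D, (L (u x) - ub x) * deriv L (u x) * v x := by
    rw [hμ] at *
    simp only [hF', zero_mul, add_zero]
    exact integral_const_mul 2 _
  rw [heq] at hderiv
  refine hderiv.congr' ?_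
  filter_upwards [self_mem_nhdsWithin] with s hs
  simp [slope, hF, hμ, sub_zero, div_eq_inv_mul]
end

section
/- Let Ω ⊆ ℝ² be open, D ⊆ Ω measurable, μ, λ > 0, and let 𝓛(r,g,b) = α r + β g + γ b with α, β, γ > 0, α + β + γ = 1. Let ū : Ω → ℝ³ and let u = (u₁,u₂,u₃) : Ω → ℝ³ be such that: (i) each component has straight isophotes, u_k(x,y) = h_k(a x + b y) with h_k ∈ C²(ℝ), (a,b) ≠ (0,0), and h_k'(a x + b y) ≠ 0 for a.e. (x,y) ∈ Ω; (ii) u(x) = ū(x) for a.e. x ∈ Ω \ D; (iii) 𝓛(u(x)) = 𝓛(ū(x)) and ū is gray on D, i.e. ū_k(x) = 𝓛(u(x)) for all k and a.e. x ∈ D. Then u is almost everywhere a stationary solution of the coupled system: for k = 1,2,3 and a.e. (x,y) ∈ Ω, |∇u_k| div( ∇u_k / |∇u_k| ) − 2μ (u_k − ū_k) 1_{Ω\D} − 2λ (𝓛(u) − ū_k) (∂𝓛/∂x_k)(u) 1_D = 0. -/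
/- STATEMENT 13: stationary solutions of the coupled Hamilton–Jacobi system for the
color inpainting problem. If the RGB image u = (u₁,u₂,u₃) has straight isophotes
u_k(x,y) = h_k(ax+by) with h_k ∈ C², h_k'∘ℓ ≠ 0 a.e. on Ω, u = ū a.e. on Ω \ D, and on D
the datum ū is gray and compatible (ū_k = 𝓛(u), 𝓛(u) = 𝓛(ū)), where
𝓛(r,g,b) = αr+βg+γb, then u is a.e. on Ω a stationary solution of
|∇u_k| div(∇u_k/|∇u_k|) − 2μ(u_k−ū_k)1_{Ω\D} − 2λ(𝓛(u)−ū_k)(∂𝓛/∂x_k)(u) 1_D = 0. -/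

open MeasureTheory Real

/-- First component of the gradient of `w : ℝ² → ℝ`. -/
noncomputable def grad1 (w : ℝ × ℝ → ℝ) (p : ℝ × ℝ) : ℝ := fderiv ℝ w p (1, 0)

/-- Second component of the gradient of `w : ℝ² → ℝ`. -/
noncomputable def grad2 (w : ℝ × ℝ → ℝ) (p : ℝ × ℝ) : ℝ := fderiv ℝ w p (0, 1)

/-- Euclidean norm of the gradient, |∇w|. -/
noncomputable def gradNorm (w : ℝ × ℝ → ℝ) (p : ℝ × ℝ) : ℝ :=
  Real.sqrt ((grad1 w p) ^ 2 + (grad2 w p) ^ 2)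

/-- The mean-curvature operator div(∇w/|∇w|) at `p`. -/
noncomputable def meanCurv (w : ℝ × ℝ → ℝ) (p : ℝ × ℝ) : ℝ :=
  deriv (fun s => grad1 w (s, p.2) / gradNorm w (s, p.2)) p.1 +
    deriv (fun s => grad2 w (p.1, s) / gradNorm w (p.1, s)) p.2


lemma deriv_quot_abs_zero {f : ℝ → ℝ} (hf : Continuous f) {x : ℝ} (hx : f x ≠ 0) (c C : ℝ) :
    deriv (fun s => (f s * c) / (|f s| * C)) x = 0 := by
  rcases hx.lt_or_gt with hneg | hpos
  · have hev : ∀ᶠ s in nhds x, f s < 0 := (hf.tendsto x).eventually (eventually_lt_nhds hneg)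
    have heq : (fun s => (f s * c) / (|f s| * C)) =ᶠ[nhds x] fun _ => -(c / C) := by
      filter_upwards [hev] with s hs
      rw [abs_of_neg hs, neg_mul, div_neg, mul_div_mul_left _ _ hs.ne]
    rw [heq.deriv_eq, deriv_const]
  · have hev : ∀ᶠ s in nhds x, 0 < f s := (hf.tendsto x).eventually (eventually_gt_nhds hpos)
    have heq : (fun s => (f s * c) / (|f s| * C)) =ᶠ[nhds x] fun _ => c / C := by
      filter_upwards [hev] with s hs
      rw [abs_of_pos hs, mul_div_mul_left _ _ hs.ne']
    rw [heq.deriv_eq, deriv_const]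

lemma hasFDerivAt_line (a b : ℝ) (h : ℝ → ℝ) (hh : ContDiff ℝ 2 h) (q : ℝ × ℝ) :
    HasFDerivAt (fun q : ℝ × ℝ => h (a * q.1 + b * q.2))
      (deriv h (a * q.1 + b * q.2) •
        (a • ContinuousLinearMap.fst ℝ ℝ ℝ + b • ContinuousLinearMap.snd ℝ ℝ ℝ)) q := by
  have hL : HasFDerivAt (fun q : ℝ × ℝ => a * q.1 + b * q.2)
      (a • ContinuousLinearMap.fst ℝ ℝ ℝ + b • ContinuousLinearMap.snd ℝ ℝ ℝ) q := by
    have heq : (fun q : ℝ × ℝ => a * q.1 + b * q.2)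
        = ⇑(a • ContinuousLinearMap.fst ℝ ℝ ℝ + b • ContinuousLinearMap.snd ℝ ℝ ℝ) := by
      funext q; simp [smul_eq_mul]
    rw [heq]
    exact (a • ContinuousLinearMap.fst ℝ ℝ ℝ + b • ContinuousLinearMap.snd ℝ ℝ ℝ).hasFDerivAt
  have hd : HasDerivAt h (deriv h (a * q.1 + b * q.2)) (a * q.1 + b * q.2) :=
    ((hh.differentiable two_ne_zero) _).hasDerivAt
  exact hd.comp_hasFDerivAt q hL

lemma grad1_line (a b : ℝ) (h : ℝ → ℝ) (hh : ContDiff ℝ 2 h) (q : ℝ × ℝ) :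
    grad1 (fun q : ℝ × ℝ => h (a * q.1 + b * q.2)) q = deriv h (a * q.1 + b * q.2) * a := by
  rw [grad1, (hasFDerivAt_line a b h hh q).fderiv]
  simp

lemma grad2_line (a b : ℝ) (h : ℝ → ℝ) (hh : ContDiff ℝ 2 h) (q : ℝ × ℝ) :
    grad2 (fun q : ℝ × ℝ => h (a * q.1 + b * q.2)) q = deriv h (a * q.1 + b * q.2) * b := by
  rw [grad2, (hasFDerivAt_line a b h hh q).fderiv]
  simp

lemma gradNorm_line (a b : ℝ) (h : ℝ → ℝ) (hh : ContDiff ℝ 2 h) (q : ℝ × ℝ) :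
    gradNorm (fun q : ℝ × ℝ => h (a * q.1 + b * q.2)) q
      = |deriv h (a * q.1 + b * q.2)| * Real.sqrt (a ^ 2 + b ^ 2) := by
  rw [gradNorm, grad1_line a b h hh, grad2_line a b h hh, ← Real.sqrt_sq_eq_abs,
    ← Real.sqrt_mul (sq_nonneg _)]
  ring_nf

lemma meanCurv_line_zero (a b : ℝ) (h : ℝ → ℝ) (hh : ContDiff ℝ 2 h)
    (p : ℝ × ℝ) (hp : deriv h (a * p.1 + b * p.2) ≠ 0) :
    meanCurv (fun q : ℝ × ℝ => h (a * q.1 + b * q.2)) p = 0 := by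
  have hcont : Continuous (deriv h) := hh.continuous_deriv one_le_two
  rw [meanCurv]
  have e1 : (fun s => grad1 (fun q : ℝ × ℝ => h (a * q.1 + b * q.2)) (s, p.2) /
      gradNorm (fun q : ℝ × ℝ => h (a * q.1 + b * q.2)) (s, p.2))
      = fun s => (deriv h (a * s + b * p.2) * a) /
        (|deriv h (a * s + b * p.2)| * Real.sqrt (a ^ 2 + b ^ 2)) := by
    funext s
    rw [grad1_line a b h hh, gradNorm_line a b h hh]
  have e2 : (fun s => grad2 (fun q : ℝ × ℝ => h (a * q.1 + b * q.2)) (p.1, s) /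
      gradNorm (fun q : ℝ × ℝ => h (a * q.1 + b * q.2)) (p.1, s))
      = fun s => (deriv h (a * p.1 + b * s) * b) /
        (|deriv h (a * p.1 + b * s)| * Real.sqrt (a ^ 2 + b ^ 2)) := by
    funext s
    rw [grad2_line a b h hh, gradNorm_line a b h hh]
  rw [e1, e2,
    deriv_quot_abs_zero (f := fun s => deriv h (a * s + b * p.2))
      (hcont.comp (by continuity)) hp _ _,
    deriv_quot_abs_zero (f := fun s => deriv h (a * p.1 + b * s))
      (hcont.comp (by continuity)) hp _ _, add_zero]

theorem stationary_solution_straight_isophotes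
    (Ω : Set (ℝ × ℝ)) (hΩ : IsOpen Ω)
    (D : Set (ℝ × ℝ)) (hD : MeasurableSet D) (hDΩ : D ⊆ Ω)
    (mu lam : ℝ) (hmu : 0 < mu) (hlam : 0 < lam)
    (α β γ : ℝ) (hα : 0 < α) (hβ : 0 < β) (hγ : 0 < γ) (hsum : α + β + γ = 1)
    -- sensitivity coefficients c k = ∂𝓛/∂x_k, so that 𝓛(v) = ∑ k, c k * v k
    (c : Fin 3 → ℝ) (hc0 : c 0 = α) (hc1 : c 1 = β) (hc2 : c 2 = γ)
    -- (i) straight isophotes with nondegenerate gradient a.e. on Ω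
    (a b : ℝ) (hab : (a, b) ≠ ((0 : ℝ), (0 : ℝ)))
    (h : Fin 3 → ℝ → ℝ) (hh : ∀ k, ContDiff ℝ 2 (h k))
    (u : Fin 3 → ℝ × ℝ → ℝ) (hu : ∀ k, ∀ p : ℝ × ℝ, u k p = h k (a * p.1 + b * p.2))
    (hne : ∀ k, ∀ᵐ p : ℝ × ℝ, p ∈ Ω → deriv (h k) (a * p.1 + b * p.2) ≠ 0)
    (ub : Fin 3 → ℝ × ℝ → ℝ)
    -- (ii) u coincides with the (colored) datum ū a.e. on Ω \ D
    (hcol : ∀ᵐ p : ℝ × ℝ, p ∈ Ω \ D → ∀ k, u k p = ub k p)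
    -- (iii) on D the datum ū is gray: 𝓛(u) = 𝓛(ū) and ū_k = 𝓛(u) for all k
    (hgray : ∀ᵐ p : ℝ × ℝ, p ∈ D →
      ((∑ j, c j * u j p) = (∑ j, c j * ub j p) ∧ ∀ k, ub k p = ∑ j, c j * u j p)) :
    ∀ k, ∀ᵐ p : ℝ × ℝ, p ∈ Ω →
      gradNorm (u k) p * meanCurv (u k) p
        - 2 * mu * (u k p - ub k p) * Set.indicator (Ω \ D) (fun _ => (1 : ℝ)) p
        - 2 * lam * ((∑ j, c j * u j p) - ub k p) * c k *
            Set.indicator D (fun _ => (1 : ℝ)) p = 0 := by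
  intro k
  filter_upwards [hne k, hcol, hgray] with p hpk hpcol hpgray hpΩ
  have huk : u k = fun q : ℝ × ℝ => h k (a * q.1 + b * q.2) := funext fun q => hu k q
  have hcurv : gradNorm (u k) p * meanCurv (u k) p = 0 := by
    rw [huk, meanCurv_line_zero a b (h k) (hh k) p (hpk hpΩ), mul_zero]
  by_cases hpD : p ∈ D
  · have h1 : Set.indicator (Ω \ D) (fun _ => (1 : ℝ)) p = 0 :=
      Set.indicator_of_notMem (fun hm => hm.2 hpD) _
    have h2 : Set.indicator D (fun _ => (1 : ℝ)) p = 1 := Set.indicator_of_mem hpD _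
    obtain ⟨-, hub⟩ := hpgray hpD
    rw [hcurv, h1, h2, hub k]
    ring
  · have hmem : p ∈ Ω \ D := ⟨hpΩ, hpD⟩
    have h2 : Set.indicator D (fun _ => (1 : ℝ)) p = 0 := Set.indicator_of_notMem hpD _
    rw [hcurv, h2, hpcol hmem k]
    ring
end
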